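/- Let G'=(V',E') be a directed graph without self-loops in which every node has in-degree 2 and out-degree 2, and such that for every ordered pair of distinct nodes u,v there exist two edge-disjoint directed paths from u to v. Suppose there exists a family (F_e)_{e ∈ E'} such that F_e is a frame for e for every e ∈ E', and for all e₁, e₂ ∈ E' one has e₂ ∈ F_{e₁} if and only if e₁ ∈ F_{e₂}. Then the constant vector x with x_e = 2/3 for all e ∈ E' lies in N(AT_bal(G')). -/

import Mathlib

open Finset

namespace TSPGap


/-! ### Lovász–Schrijver lift-and-project operators -/

/-- `cone(R) = {(λ, λx) : λ ≥ 0, x ∈ R}`, with the extra 0th coordinate first. -/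
def lsCone {ι : Type*} (R : Set (ι → ℝ)) : Set (ℝ × (ι → ℝ)) :=
  {p | ∃ c : ℝ, ∃ y ∈ R, 0 ≤ c ∧ p.1 = c ∧ p.2 = fun i => c * y i}

/-- `X` is a protection matrix witnessing `x ∈ N(R)`: it is symmetric, its 0th row and
diagonal both equal `(1, x)`, and each row `X_i` and difference `X_0 - X_i` lies in `cone(R)`. -/
def IsProtection {ι : Type*} (R : Set (ι → ℝ)) (x : ι → ℝ)
    (X : Option ι → Option ι → ℝ) : Prop :=
  (∀ i j, X i j = X j i) ∧
  X none none = 1 ∧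
  (∀ i, X none (some i) = x i) ∧
  (∀ i, X (some i) (some i) = x i) ∧
  (∀ i, (X (some i) none, fun j => X (some i) (some j)) ∈ lsCone R) ∧
  (∀ i, (X none none - X (some i) none,
         fun j => X none (some j) - X (some i) (some j)) ∈ lsCone R)

/-- The Lovász–Schrijver `N` operator. -/
def lsN {ι : Type*} (R : Set (ι → ℝ)) : Set (ι → ℝ) :=
  {x | ∃ X : Option ι → Option ι → ℝ, IsProtection R x X}

/-- The Lovász–Schrijver `N₊` operator (protection matrix additionally PSD). -/
def lsNplus {ι : Type*} [Fintype ι] (R : Set (ι → ℝ)) : Set (ι → ℝ) :=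
  {x | ∃ X : Matrix (Option ι) (Option ι) ℝ, X.PosSemidef ∧
        IsProtection R x (fun i j => X i j)}

/-! ### Directed graphs -/

variable {V : Type*} [DecidableEq V]

/-- The list of (directed) steps of a walk given by its list of vertices. -/
def dSteps (l : List V) : List (V × V) := l.zip l.tail

/-- The steps of a closed walk given by its list of vertices. -/
def cycSteps (l : List V) : List (V × V) := l.zip (l.rotate 1)

/-- `l` is a directed walk from `u` to `v` using edges of `E`. -/
def IsDWalk (E : Finset (V × V)) (u v : V) (l : List V) : Prop :=
  l.head? = some u ∧ l.getLast? = some v ∧ ∀ a ∈ dSteps l, a ∈ E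

/-- Total weight of a walk. -/
def dWalkWeight (w : V × V → ℝ) (l : List V) : ℝ := ((dSteps l).map w).sum

/-- Shortest-path distance from `u` to `v` in the weighted directed graph `(E, w)`. -/
noncomputable def dDist (E : Finset (V × V)) (w : V × V → ℝ) (u v : V) : ℝ :=
  sInf {c | ∃ l : List V, IsDWalk E u v l ∧ dWalkWeight w l = c}

/-- `x(δ⁺(S))`. -/
def outCut (E : Finset (V × V)) (x : ↥E → ℝ) (S : Finset V) : ℝ :=
  ∑ e ∈ E.attach.filter (fun e => e.val.1 ∈ S ∧ e.val.2 ∉ S), x e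

/-- `x(δ⁻(S))`. -/
def inCut (E : Finset (V × V)) (x : ↥E → ℝ) (S : Finset V) : ℝ :=
  ∑ e ∈ E.attach.filter (fun e => e.val.1 ∉ S ∧ e.val.2 ∈ S), x e

/-- `d · x = ∑_e d_e x_e` over the edge set `E`. -/
def dDot (E : Finset (V × V)) (d : V × V → ℝ) (x : ↥E → ℝ) : ℝ :=
  ∑ e ∈ E.attach, d e.val * x e

/-- The balanced asymmetric tour polytope of the directed graph with node set `VS`
and edge set `E`. -/
def ATbal (VS : Finset V) (E : Finset (V × V)) : Set (↥E → ℝ) :=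
  {x | (∀ e, 0 ≤ x e ∧ x e ≤ 1) ∧
       (∀ S : Finset V, S ⊆ VS → S.Nonempty → S ≠ VS →
          1 ≤ outCut E x S ∧ 1 ≤ inCut E x S) ∧
       (∀ v ∈ VS, outCut E x {v} = inCut E x {v})}

/-- Indicator vectors of Hamiltonian cycles (on node set `VS`) among edges `E`. -/
def hamCycleVecs (VS : Finset V) (E : Finset (V × V)) : Set (↥E → ℝ) :=
  {x | ∃ c : List V, 2 ≤ c.length ∧ c.Nodup ∧ c.toFinset = VS ∧
        (∀ a ∈ cycSteps c, a ∈ E) ∧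
        ∀ e : ↥E, x e = if e.val ∈ cycSteps c then 1 else 0}

/-- Edge set of the complete directed graph on the node set `VS` (no self-loops). -/
def dComplete (VS : Finset V) : Finset (V × V) := (VS ×ˢ VS).filter (fun e => e.1 ≠ e.2)

/-- Edge set of the complete directed graph on all of `V` (no self-loops). -/
def dCompleteAll (V : Type*) [Fintype V] [DecidableEq V] : Finset (V × V) :=
  Finset.univ.filter (fun e => e.1 ≠ e.2)

/-- Out-degree of `v` in edge set `E`. -/
def outDeg (E : Finset (V × V)) (v : V) : ℕ := (E.filter (fun e => e.1 = v)).card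

/-- In-degree of `v` in edge set `E`. -/
def inDeg (E : Finset (V × V)) (v : V) : ℕ := (E.filter (fun e => e.2 = v)).card

/-- A frame for the edge `e = (u,v)`: a set `F ⊆ E \ {e}` consisting of an edge-simple
path from `u` to `v` together with zero or more edge-simple cycles, all pairwise
edge-disjoint. -/
def IsFrame (E : Finset (V × V)) (e : V × V) (F : Finset (V × V)) : Prop :=
  F ⊆ E.erase e ∧
  ∃ (p : List V) (cs : List (List V)),
    p.head? = some e.1 ∧ p.getLast? = some e.2 ∧ (∀ a ∈ dSteps p, a ∈ E) ∧
    (∀ c ∈ cs, c ≠ [] ∧ ∀ a ∈ cycSteps c, a ∈ E) ∧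
    (dSteps p ++ (cs.map cycSteps).flatten).Nodup ∧
    F = (dSteps p ++ (cs.map cycSteps).flatten).toFinset

/-- There exist two edge-disjoint directed (simple) paths from `u` to `v` in `E`. -/
def TwoEdgeDisjointPaths (E : Finset (V × V)) (u v : V) : Prop :=
  ∃ p q : List V, p.Nodup ∧ q.Nodup ∧
    p.head? = some u ∧ p.getLast? = some v ∧
    q.head? = some u ∧ q.getLast? = some v ∧
    (∀ a ∈ dSteps p, a ∈ E) ∧ (∀ a ∈ dSteps q, a ∈ E) ∧
    (dSteps p).Disjoint (dSteps q)




/-! ### The Charikar–Goemans–Karloff graphs -/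

/-- Vertex type housing the graph `G_{k,r}` (index `k = 0` is a dummy level). -/
def CGKV : ℕ → Type
  | 0 => PUnit
  | 1 => ℕ
  | k + 2 => (ℕ × CGKV (k + 1)) ⊕ Fin 2

instance CGKV.decEq : (k : ℕ) → DecidableEq (CGKV k)
  | 0 => inferInstanceAs (DecidableEq PUnit)
  | 1 => inferInstanceAs (DecidableEq ℕ)
  | k + 2 =>
      letI : DecidableEq (CGKV (k + 1)) := CGKV.decEq (k + 1)
      inferInstanceAs (DecidableEq ((ℕ × CGKV (k + 1)) ⊕ Fin 2))

/-- The source of `G_{k,r}`. -/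
def CGKsrc (r : ℕ) : (k : ℕ) → CGKV k
  | 0 => PUnit.unit
  | 1 => (0 : ℕ)
  | _ + 2 => Sum.inr 0

/-- The sink of `G_{k,r}`. -/
def CGKsnk (r : ℕ) : (k : ℕ) → CGKV k
  | 0 => PUnit.unit
  | 1 => (r + 1 : ℕ)
  | _ + 2 => Sum.inr 1

/-- The node set of `G_{k,r}`. -/
def CGKVS (r : ℕ) : (k : ℕ) → Finset (CGKV k)
  | 0 => ∅
  | 1 => Finset.range (r + 2)
  | k + 2 =>
      ((Finset.range r) ×ˢ CGKVS r (k + 1)).image Sum.inl ∪ {Sum.inr 0, Sum.inr 1}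

/-- The edge set of `G_{k,r}`: at level 1, two oppositely-directed paths of `r+1` edges
on the nodes `0, …, r+1`; at level `k+2`, the edges of the `r` copies of `G_{k+1,r}`
together with a path from the source `s` through the copies' sources to the sink `t`,
and a path from `t` through the copies' sinks (in the opposite order) back to `s`. -/
def CGKE (r : ℕ) : (k : ℕ) → Finset (CGKV k × CGKV k)
  | 0 => ∅
  | 1 => (dSteps (List.range (r + 2))).toFinset ∪
         (dSteps (List.range (r + 2)).reverse).toFinset
  | k + 2 =>
      (Finset.range r).biUnion
        (fun j => (CGKE r (k + 1)).image (fun e => (Sum.inl (j, e.1), Sum.inl (j, e.2)))) ∪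
      (dSteps (Sum.inr 0 ::
        ((List.range r).map (fun j => Sum.inl (j, CGKsrc r (k + 1)))) ++ [Sum.inr 1])).toFinset ∪
      (dSteps (Sum.inr 1 ::
        (((List.range r).map (fun j => Sum.inl (j, CGKsnk r (k + 1)))).reverse) ++ [Sum.inr 0])).toFinset

/-- Edge weights of `G_{k,r}` (and of `L_{k,r}`): level-`ℓ` edges have weight `r^(ℓ-1)`. -/
def CGKw (r : ℕ) : (k : ℕ) → CGKV k × CGKV k → ℝ
  | 0, _ => 0
  | 1, _ => 1
  | k + 2, e =>
      match e with
      | (Sum.inl (j, u), Sum.inl (j', v)) =>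
          if j = j' then CGKw r (k + 1) (u, v) else (r : ℝ) ^ (k + 1)
      | _ => (r : ℝ) ^ (k + 1)

/-- `v₁`: the successor of `s` on the forward path of `G_{k,r}`. -/
def Lv1 (r : ℕ) : (k : ℕ) → CGKV k
  | 0 => PUnit.unit
  | 1 => (1 : ℕ)
  | k + 2 => Sum.inl (0, CGKsrc r (k + 1))

/-- `v₂`: the predecessor of `t` on the forward path of `G_{k,r}`. -/
def Lv2 (r : ℕ) : (k : ℕ) → CGKV k
  | 0 => PUnit.unit
  | 1 => (r : ℕ)
  | k + 2 => Sum.inl (r - 1, CGKsrc r (k + 1))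

/-- `v₃`: the successor of `t` on the backward path of `G_{k,r}`. -/
def Lv3 (r : ℕ) : (k : ℕ) → CGKV k
  | 0 => PUnit.unit
  | 1 => (r : ℕ)
  | k + 2 => Sum.inl (r - 1, CGKsnk r (k + 1))

/-- `v₄`: the predecessor of `s` on the backward path of `G_{k,r}`. -/
def Lv4 (r : ℕ) : (k : ℕ) → CGKV k
  | 0 => PUnit.unit
  | 1 => (1 : ℕ)
  | k + 2 => Sum.inl (0, CGKsnk r (k + 1))

/-- The node set `V_{k,r}` of `L_{k,r}`: the nodes of `G_{k,r}` minus the two terminals. -/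
def LVS (r k : ℕ) : Finset (CGKV k) :=
  ((CGKVS r k).erase (CGKsrc r k)).erase (CGKsnk r k)

/-- The edge set `E_{k,r}` of `L_{k,r}`: the edges of `G_{k,r}` not incident to a terminal,
plus the two new edges `(v₂,v₁)` and `(v₄,v₃)`. -/
def LE (r k : ℕ) : Finset (CGKV k × CGKV k) :=
  (CGKE r k).filter (fun e =>
    e.1 ≠ CGKsrc r k ∧ e.1 ≠ CGKsnk r k ∧ e.2 ≠ CGKsrc r k ∧ e.2 ≠ CGKsnk r k) ∪
  {(Lv2 r k, Lv1 r k), (Lv4 r k, Lv3 r k)}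



/-! ### Undirected graphs -/

variable {V : Type*} [DecidableEq V]

/-- The (undirected) steps of a walk given by its list of vertices. -/
def uSteps (l : List V) : List (Sym2 V) := (l.zip l.tail).map (fun p => Sym2.mk p.1 p.2)

/-- `l` is a walk from `u` to `v` in the undirected edge set `E`. -/
def IsUWalk (E : Finset (Sym2 V)) (u v : V) (l : List V) : Prop :=
  l.head? = some u ∧ l.getLast? = some v ∧ ∀ e ∈ uSteps l, e ∈ E

/-- Whether the undirected edge `e` crosses the cut `(S, S̄)`. -/
def uCrosses (S : Finset V) (e : Sym2 V) : Bool :=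
  Sym2.lift ⟨fun a b => xor (decide (a ∈ S)) (decide (b ∈ S)),
    fun a b => Bool.xor_comm _ _⟩ e

/-- `x(δ(S))`. -/
def uCut (E : Finset (Sym2 V)) (x : ↥E → ℝ) (S : Finset V) : ℝ :=
  ∑ e ∈ E.attach.filter (fun e => uCrosses S e.val), x e

/-- `d · x = ∑_e d_e x_e` over the undirected edge set `E`. -/
def uDot (E : Finset (Sym2 V)) (d : Sym2 V → ℝ) (x : ↥E → ℝ) : ℝ :=
  ∑ e ∈ E.attach, d e.val * x e

/-- The symmetric tour polytope of the undirected graph with node set `VS`, edges `E`. -/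
def STpoly (VS : Finset V) (E : Finset (Sym2 V)) : Set (↥E → ℝ) :=
  {x | (∀ e, 0 ≤ x e ∧ x e ≤ 1) ∧
       (∀ S : Finset V, S ⊆ VS → S.Nonempty → S ≠ VS → 2 ≤ uCut E x S) ∧
       (∀ v ∈ VS, uCut E x {v} = 2)}

/-- The symmetric path polytope of the undirected graph with node set `VS`, edges `E`,
and endpoints `s`, `t`. -/
def SPpoly (VS : Finset V) (E : Finset (Sym2 V)) (s t : V) : Set (↥E → ℝ) :=
  {x | (∀ e, 0 ≤ x e ∧ x e ≤ 1) ∧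
       (∀ S : Finset V, S ⊆ VS → S.Nonempty → S ≠ VS →
          (((s ∈ S) ↔ (t ∈ S)) → 2 ≤ uCut E x S) ∧
          (¬((s ∈ S) ↔ (t ∈ S)) → 1 ≤ uCut E x S)) ∧
       (∀ v ∈ VS, v ≠ s → v ≠ t → uCut E x {v} = 2) ∧
       uCut E x {s} = 1 ∧ uCut E x {t} = 1}

/-- Indicator vectors of Hamiltonian paths from `s` to `t` (on node set `VS`) among
edges `E`. -/
def uHamPathVecs (VS : Finset V) (E : Finset (Sym2 V)) (s t : V) : Set (↥E → ℝ) :=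
  {x | ∃ p : List V, p.Nodup ∧ p.toFinset = VS ∧
        p.head? = some s ∧ p.getLast? = some t ∧
        (∀ e ∈ uSteps p, e ∈ E) ∧
        ∀ e : ↥E, x e = if e.val ∈ uSteps p then 1 else 0}

/-- Edge set of the complete undirected graph on all of `V` (no self-loops). -/
def uCompleteAll (V : Type*) [Fintype V] [DecidableEq V] : Finset (Sym2 V) :=
  Finset.univ.filter (fun e => ¬ e.IsDiag)

/-- Shortest-path distance (number of edges) between the endpoints of `e`, in the
unweighted undirected graph with edge set `E`. -/
noncomputable def uDist (E : Finset (Sym2 V)) (e : Sym2 V) : ℝ :=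
  sInf {c | ∃ u v : V, e = s(u, v) ∧
    ∃ l : List V, IsUWalk E u v l ∧ ((uSteps l).length : ℝ) = c}

/-! ### Cheung's graphs -/

/-- The node set `V_{ℓ,q}` of Cheung's graph `G_{ℓ,q}`: a top path and a bottom path of
`ℓ+1` nodes each, a left and a right clique of `3q+3` nodes each, and nodes `s`, `t`. -/
inductive ChV (l q : ℕ) where
  | top : Fin (l + 1) → ChV l q
  | bot : Fin (l + 1) → ChV l q
  | left : Fin (3 * q + 3) → ChV l q
  | right : Fin (3 * q + 3) → ChV l q
  | vs : ChV l q
  | vt : ChV l q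
deriving DecidableEq, Fintype

/-- The edges of the two paths of `G_{ℓ,q}`. -/
def ChEpaths (l q : ℕ) : Finset (Sym2 (ChV l q)) :=
  (Finset.univ : Finset (Fin l)).image
    (fun i => s(ChV.top i.castSucc, ChV.top i.succ)) ∪
  (Finset.univ : Finset (Fin l)).image
    (fun i => s(ChV.bot i.castSucc, ChV.bot i.succ))

/-- The edges within the two cliques of `G_{ℓ,q}`. -/
def ChEcliques (l q : ℕ) : Finset (Sym2 (ChV l q)) :=
  ((Finset.univ : Finset (Fin (3 * q + 3) × Fin (3 * q + 3))).filter
      (fun p => p.1 ≠ p.2)).image (fun p => s(ChV.left p.1, ChV.left p.2)) ∪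
  ((Finset.univ : Finset (Fin (3 * q + 3) × Fin (3 * q + 3))).filter
      (fun p => p.1 ≠ p.2)).image (fun p => s(ChV.right p.1, ChV.right p.2))

/-- The connection edges of `G_{ℓ,q}`: path endpoints to the cliques, `s` to the left
clique, and `t` to the right clique. -/
def ChEconn (l q : ℕ) : Finset (Sym2 (ChV l q)) :=
  (Finset.univ : Finset (Fin (3 * q + 3))).image (fun i => s(ChV.top 0, ChV.left i)) ∪
  (Finset.univ : Finset (Fin (3 * q + 3))).image (fun i => s(ChV.bot 0, ChV.left i)) ∪
  (Finset.univ : Finset (Fin (3 * q + 3))).image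
    (fun i => s(ChV.top (Fin.last l), ChV.right i)) ∪
  (Finset.univ : Finset (Fin (3 * q + 3))).image
    (fun i => s(ChV.bot (Fin.last l), ChV.right i)) ∪
  (Finset.univ : Finset (Fin (3 * q + 3))).image (fun i => s(ChV.vs, ChV.left i)) ∪
  (Finset.univ : Finset (Fin (3 * q + 3))).image (fun i => s(ChV.vt, ChV.right i))

/-- The edge set `E_{ℓ,q}` of Cheung's graph `G_{ℓ,q}`. -/
def ChE (l q : ℕ) : Finset (Sym2 (ChV l q)) :=
  ChEpaths l q ∪ ChEcliques l q ∪ ChEconn l q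

/-- The node set of `G'_{ℓ,q}`: `G_{ℓ,q}` plus `ℓ-1` new internal path nodes. -/
inductive ChV' (l q : ℕ) where
  | old : ChV l q → ChV' l q
  | mid : Fin (l - 1) → ChV' l q
deriving DecidableEq, Fintype

/-- The new `s`–`t` path of `G'_{ℓ,q}` (as a list of nodes; it has `ℓ` edges). -/
def ChPathList (l q : ℕ) : List (ChV' l q) :=
  ChV'.old ChV.vs :: ((List.finRange (l - 1)).map ChV'.mid ++ [ChV'.old ChV.vt])

/-- The edge set `E'_{ℓ,q}` of `G'_{ℓ,q}`: the (old) edges of `G_{ℓ,q}` together with the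
`ℓ` new edges of a path from `s` to `t` through `ℓ-1` new nodes. -/
def ChE' (l q : ℕ) : Finset (Sym2 (ChV' l q)) :=
  (ChE l q).image (Sym2.map ChV'.old) ∪ (uSteps (ChPathList l q)).toFinset


section Stmt5Aux
variable {W : Type*} [DecidableEq W]

lemma dSteps_cons_cons (a b : W) (t : List W) :
    dSteps (a :: b :: t) = (a, b) :: dSteps (b :: t) := rfl

lemma exists_cross {P : W → Prop} :
    ∀ (l : List W) {a b : W}, l.head? = some a → l.getLast? = some b → P a → ¬ P b →
      ∃ s ∈ dSteps l, P s.1 ∧ ¬ P s.2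
  | [], a, b, ha, hb, hPa, hPb => by simp at ha
  | [x], a, b, ha, hb, hPa, hPb => by
      simp only [List.head?_cons, Option.some.injEq] at ha
      simp only [List.getLast?_singleton, Option.some.injEq] at hb
      subst ha; subst hb; exact absurd hPa hPb
  | x :: y :: t, a, b, ha, hb, hPa, hPb => by
      simp only [List.head?_cons, Option.some.injEq] at ha
      subst ha
      by_cases hy : P y
      · obtain ⟨s, hs, h1, h2⟩ :=
          exists_cross (y :: t) (by simp) (by rw [← List.getLast?_cons_cons]; exact hb) hy hPb
        exact ⟨s, by rw [dSteps_cons_cons]; exact List.mem_cons_of_mem _ hs, h1, h2⟩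
      · exact ⟨(x, y), by rw [dSteps_cons_cons]; exact List.mem_cons_self, hPa, hy⟩

lemma countP_dSteps (v : W) :
    ∀ l : List W,
      (dSteps l).countP (fun s => decide (s.1 = v)) + (if l.getLast? = some v then 1 else 0)
        = (dSteps l).countP (fun s => decide (s.2 = v)) + (if l.head? = some v then 1 else 0)
  | [] => by simp [dSteps]
  | [x] => by simp [dSteps]
  | x :: y :: t => by
      have ih := countP_dSteps v (y :: t)
      rw [dSteps_cons_cons, List.countP_cons, List.countP_cons, List.getLast?_cons_cons]
      simp only [List.head?_cons, Option.some.injEq] at ih ⊢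
      by_cases hx : x = v <;> by_cases hy : y = v <;> simp [hx, hy] at ih ⊢ <;> omega

lemma countP_cycSteps (v : W) (c : List W) :
    (cycSteps c).countP (fun s => decide (s.1 = v)) =
    (cycSteps c).countP (fun s => decide (s.2 = v)) := by
  have h1 : List.map Prod.fst (c.zip (c.rotate 1)) = c := List.map_fst_zip (by simp)
  have h2 : List.map Prod.snd (c.zip (c.rotate 1)) = c.rotate 1 := List.map_snd_zip (by simp)
  have e1 := List.countP_map (p := fun x => decide (x = v)) (f := Prod.fst) (l := c.zip (c.rotate 1))
  have e2 := List.countP_map (p := fun x => decide (x = v)) (f := Prod.snd) (l := c.zip (c.rotate 1))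
  rw [h1] at e1
  rw [h2] at e2
  have e3 := (List.rotate_perm c 1).countP_eq (fun x => decide (x = v))
  exact e1.symm.trans (e3.symm.trans e2)

lemma frame_balance (E : Finset (W × W)) (e : W × W) (F : Finset (W × W))
    (hF : IsFrame E e F) (v : W) :
    (F.filter (fun f => f.1 = v)).card + (if e.2 = v then 1 else 0)
      = (F.filter (fun f => f.2 = v)).card + (if e.1 = v then 1 else 0) := by
  obtain ⟨hsub, p, cs, hp1, hp2, hpE, hcs, hnd, hFeq⟩ := hF
  set L := dSteps p ++ (cs.map cycSteps).flatten with hL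
  have hcard : ∀ (q : W × W → Bool),
      (F.filter (fun f => q f = true)).card = L.countP q := by
    intro q
    rw [hFeq, ← List.toFinset_filter, List.toFinset_card_of_nodup (hnd.filter _),
      List.countP_eq_length_filter]
  have hout : (F.filter (fun f => f.1 = v)).card = L.countP (fun s => decide (s.1 = v)) := by
    rw [← hcard]; simp
  have hin : (F.filter (fun f => f.2 = v)).card = L.countP (fun s => decide (s.2 = v)) := by
    rw [← hcard]; simp
  have hflat : (cs.map cycSteps).flatten.countP (fun s => decide (s.1 = v))
      = (cs.map cycSteps).flatten.countP (fun s => decide (s.2 = v)) := by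
    rw [List.countP_flatten, List.countP_flatten, List.map_map, List.map_map]
    congr 1
    exact List.map_congr_left (fun c _ => countP_cycSteps v c)
  have hpath := countP_dSteps v p
  rw [hp1, hp2] at hpath
  simp only [Option.some.injEq] at hpath
  rw [hout, hin, hL, List.countP_append, List.countP_append, hflat]
  by_cases h1 : e.1 = v <;> by_cases h2 : e.2 = v <;>
    simp [h1, h2] at hpath ⊢ <;> omega

lemma sum_attach_filter (E : Finset (W × W)) (p : W × W → Prop) [DecidablePred p]
    (g : W × W → ℝ) :
    ∑ f ∈ E.attach.filter (fun f => p f.val), g f.val = ∑ f ∈ E.filter p, g f := by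
  rw [Finset.sum_filter, Finset.sum_attach E (fun f => if p f then g f else 0),
    ← Finset.sum_filter]

lemma cut_balance (E : Finset (W × W)) (hloop : ∀ f ∈ E, f.1 ≠ f.2)
    (hdeg : ∀ v : W, outDeg E v = 2 ∧ inDeg E v = 2)
    (e : W × W) (he : e ∈ E) (F : Finset (W × W)) (hF : IsFrame E e F)
    (a b : ℝ) (v : W) :
    outCut E (fun f => a + b * ((if f.val = e then 1 else 0) - (if f.val ∈ F then 1 else 0))) {v}
      = inCut E (fun f => a + b * ((if f.val = e then 1 else 0) - (if f.val ∈ F then 1 else 0))) {v} := by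
  have hFsub : F ⊆ E := hF.1.trans (Finset.erase_subset _ _)
  unfold outCut inCut
  rw [sum_attach_filter E (fun f => f.1 ∈ ({v} : Finset W) ∧ f.2 ∉ ({v} : Finset W))
      (fun f => a + b * ((if f = e then 1 else 0) - (if f ∈ F then 1 else 0))),
    sum_attach_filter E (fun f => f.1 ∉ ({v} : Finset W) ∧ f.2 ∈ ({v} : Finset W))
      (fun f => a + b * ((if f = e then 1 else 0) - (if f ∈ F then 1 else 0)))]
  have hOut : E.filter (fun f => f.1 ∈ ({v} : Finset W) ∧ f.2 ∉ ({v} : Finset W))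
      = E.filter (fun f => f.1 = v) := by
    apply Finset.filter_congr; intro f hf
    simp only [Finset.mem_singleton]
    exact ⟨fun h => h.1, fun h => ⟨h, fun h2 => hloop f hf (h.trans h2.symm)⟩⟩
  have hIn : E.filter (fun f => f.1 ∉ ({v} : Finset W) ∧ f.2 ∈ ({v} : Finset W))
      = E.filter (fun f => f.2 = v) := by
    apply Finset.filter_congr; intro f hf
    simp only [Finset.mem_singleton]
    exact ⟨fun h => h.2, fun h => ⟨fun h2 => hloop f hf (h2.trans h.symm), h⟩⟩
  rw [hOut, hIn]
  have expand : ∀ (T : Finset (W × W)),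
      ∑ f ∈ T, (a + b * ((if f = e then (1:ℝ) else 0) - (if f ∈ F then 1 else 0)))
      = a * T.card + b * (if e ∈ T then 1 else 0) - b * ((T.filter (· ∈ F)).card) := by
    intro T
    rw [Finset.sum_add_distrib, Finset.sum_const, ← Finset.mul_sum,
      Finset.sum_sub_distrib, Finset.sum_ite_eq' T e (fun _ => (1:ℝ)), Finset.sum_boole]
    push_cast
    ring
  rw [expand, expand]
  have hcout : (E.filter (fun f => f.1 = v)).card = 2 := (hdeg v).1
  have hcin : (E.filter (fun f => f.2 = v)).card = 2 := (hdeg v).2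
  have hmem1 : e ∈ E.filter (fun f => f.1 = v) ↔ e.1 = v := by
    simp [Finset.mem_filter, he]
  have hmem2 : e ∈ E.filter (fun f => f.2 = v) ↔ e.2 = v := by
    simp [Finset.mem_filter, he]
  have hff1 : (E.filter (fun f => f.1 = v)).filter (· ∈ F) = F.filter (fun f => f.1 = v) := by
    ext f; simp only [Finset.mem_filter]
    exact ⟨fun h => ⟨h.2, h.1.2⟩, fun h => ⟨⟨hFsub h.1, h.2⟩, h.1⟩⟩
  have hff2 : (E.filter (fun f => f.2 = v)).filter (· ∈ F) = F.filter (fun f => f.2 = v) := by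
    ext f; simp only [Finset.mem_filter]
    exact ⟨fun h => ⟨h.2, h.1.2⟩, fun h => ⟨⟨hFsub h.1, h.2⟩, h.1⟩⟩
  rw [hcout, hcin, hff1, hff2]
  have hnat := frame_balance E e F hF v
  have hr : ((F.filter (fun f => f.1 = v)).card : ℝ) + (if e.2 = v then 1 else 0)
      = ((F.filter (fun f => f.2 = v)).card : ℝ) + (if e.1 = v then 1 else 0) := by
    have := congrArg (Nat.cast : ℕ → ℝ) hnat
    push_cast at this
    split_ifs at this ⊢ <;> push_cast at this ⊢ <;> linarith
  have h1 : (if e ∈ E.filter (fun f => f.1 = v) then (1:ℝ) else 0) = (if e.1 = v then 1 else 0) := by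
    simp [hmem1]
  have h2 : (if e ∈ E.filter (fun f => f.2 = v) then (1:ℝ) else 0) = (if e.2 = v then 1 else 0) := by
    simp [hmem2]
  rw [h1, h2]
  linear_combination -b * hr

lemma exists_two_cut_out (E : Finset (W × W))
    (hpaths : ∀ u v : W, u ≠ v → TwoEdgeDisjointPaths E u v)
    (S : Finset W) {a b : W} (ha : a ∈ S) (hb : b ∉ S) :
    ∃ f₁, f₁ ∈ E ∧ ∃ f₂, f₂ ∈ E ∧ f₁ ≠ f₂ ∧
      (f₁.1 ∈ S ∧ f₁.2 ∉ S) ∧ (f₂.1 ∈ S ∧ f₂.2 ∉ S) := by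
  have hab : a ≠ b := fun h => hb (h ▸ ha)
  obtain ⟨p, q, _, _, hp1, hp2, hq1, hq2, hpE, hqE, hdisj⟩ := hpaths a b hab
  obtain ⟨s₁, hs₁, hc₁⟩ := exists_cross (P := (· ∈ S)) p hp1 hp2 ha hb
  obtain ⟨s₂, hs₂, hc₂⟩ := exists_cross (P := (· ∈ S)) q hq1 hq2 ha hb
  exact ⟨s₁, hpE _ hs₁, s₂, hqE _ hs₂, fun h => hdisj hs₁ (h ▸ hs₂), hc₁, hc₂⟩

lemma exists_two_cut_in (E : Finset (W × W))
    (hpaths : ∀ u v : W, u ≠ v → TwoEdgeDisjointPaths E u v)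
    (S : Finset W) {a b : W} (ha : a ∈ S) (hb : b ∉ S) :
    ∃ f₁, f₁ ∈ E ∧ ∃ f₂, f₂ ∈ E ∧ f₁ ≠ f₂ ∧
      (f₁.1 ∉ S ∧ f₁.2 ∈ S) ∧ (f₂.1 ∉ S ∧ f₂.2 ∈ S) := by
  have hab : b ≠ a := fun h => hb (h ▸ ha)
  obtain ⟨p, q, _, _, hp1, hp2, hq1, hq2, hpE, hqE, hdisj⟩ := hpaths b a hab
  obtain ⟨s₁, hs₁, hc₁⟩ := exists_cross (P := (· ∉ S)) p hp1 hp2 hb (not_not_intro ha)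
  obtain ⟨s₂, hs₂, hc₂⟩ := exists_cross (P := (· ∉ S)) q hq1 hq2 hb (not_not_intro ha)
  exact ⟨s₁, hpE _ hs₁, s₂, hqE _ hs₂, fun h => hdisj hs₁ (h ▸ hs₂),
    ⟨hc₁.1, not_not.mp hc₁.2⟩, ⟨hc₂.1, not_not.mp hc₂.2⟩⟩

lemma one_le_sum_half {α : Type*} (T : Finset α) (y : α → ℝ)
    (h : ∀ f ∈ T, 1/2 ≤ y f) (hc : 2 ≤ T.card) : 1 ≤ ∑ f ∈ T, y f := by
  have h1 := Finset.card_nsmul_le_sum T y (1/2) h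
  rw [nsmul_eq_mul] at h1
  have h2 : (2:ℝ) ≤ T.card := by exact_mod_cast hc
  nlinarith

lemma one_le_sum_single {α : Type*} (T : Finset α) (y : α → ℝ) (f₀ : α)
    (h₀ : f₀ ∈ T) (h1 : 1 ≤ y f₀) (hn : ∀ f ∈ T, 0 ≤ y f) : 1 ≤ ∑ f ∈ T, y f :=
  le_trans h1 (Finset.single_le_sum hn h₀)

noncomputable def zfun (e : W × W) (F : Finset (W × W)) : (W × W) → ℝ :=
  fun f => 3/4 + (1/4 : ℝ) * ((if f = e then 1 else 0) - (if f ∈ F then 1 else 0))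
noncomputable def wfun (e : W × W) (F : Finset (W × W)) : (W × W) → ℝ :=
  fun f => 1/2 + (-(1/2) : ℝ) * ((if f = e then 1 else 0) - (if f ∈ F then 1 else 0))

lemma exists_notmem {S : Finset W} [Fintype W] (h : S ≠ Finset.univ) : ∃ b, b ∉ S := by
  by_contra hc; push_neg at hc
  exact h (Finset.eq_univ_iff_forall.mpr hc)

lemma z_mem [Fintype W] (E : Finset (W × W)) (hloop : ∀ f ∈ E, f.1 ≠ f.2)
    (hdeg : ∀ v : W, outDeg E v = 2 ∧ inDeg E v = 2)
    (hpaths : ∀ u v : W, u ≠ v → TwoEdgeDisjointPaths E u v)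
    (e : W × W) (he : e ∈ E) (F : Finset (W × W)) (hF : IsFrame E e F) :
    (fun f : ↥E => zfun e F f.val) ∈ ATbal Finset.univ E := by
  refine ⟨?_, ?_, fun v _ => cut_balance E hloop hdeg e he F hF _ _ v⟩
  · intro f; simp only [zfun]; constructor <;> split_ifs <;> norm_num
  · intro S _ hne hneq
    obtain ⟨a, ha⟩ := hne
    obtain ⟨b, hb⟩ := exists_notmem hneq
    have hhalf : ∀ f : ↥E, (1:ℝ)/2 ≤ zfun e F f.val := by
      intro f; simp only [zfun]; split_ifs <;> norm_num
    constructor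
    · obtain ⟨f₁, hf₁, f₂, hf₂, hne12, hc1, hc2⟩ := exists_two_cut_out E hpaths S ha hb
      apply one_le_sum_half _ _ (fun f _ => hhalf f)
      refine Finset.one_lt_card.mpr ⟨⟨f₁, hf₁⟩, ?_, ⟨f₂, hf₂⟩, ?_, ?_⟩
      · exact Finset.mem_filter.mpr ⟨Finset.mem_attach _ _, hc1⟩
      · exact Finset.mem_filter.mpr ⟨Finset.mem_attach _ _, hc2⟩
      · exact fun h => hne12 (congrArg Subtype.val h)
    · obtain ⟨f₁, hf₁, f₂, hf₂, hne12, hc1, hc2⟩ := exists_two_cut_in E hpaths S ha hb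
      apply one_le_sum_half _ _ (fun f _ => hhalf f)
      refine Finset.one_lt_card.mpr ⟨⟨f₁, hf₁⟩, ?_, ⟨f₂, hf₂⟩, ?_, ?_⟩
      · exact Finset.mem_filter.mpr ⟨Finset.mem_attach _ _, hc1⟩
      · exact Finset.mem_filter.mpr ⟨Finset.mem_attach _ _, hc2⟩
      · exact fun h => hne12 (congrArg Subtype.val h)

lemma w_mem [Fintype W] (E : Finset (W × W)) (hloop : ∀ f ∈ E, f.1 ≠ f.2)
    (hdeg : ∀ v : W, outDeg E v = 2 ∧ inDeg E v = 2)
    (hpaths : ∀ u v : W, u ≠ v → TwoEdgeDisjointPaths E u v)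
    (e : W × W) (he : e ∈ E) (F : Finset (W × W)) (hF : IsFrame E e F) :
    (fun f : ↥E => wfun e F f.val) ∈ ATbal Finset.univ E := by
  refine ⟨?_, ?_, fun v _ => cut_balance E hloop hdeg e he F hF _ _ v⟩
  · intro f; simp only [wfun]; constructor <;> split_ifs <;> norm_num
  · intro S _ hne hneq
    obtain ⟨a, ha⟩ := hne
    obtain ⟨b, hb⟩ := exists_notmem hneq
    have hnn : ∀ f : ↥E, (0:ℝ) ≤ wfun e F f.val := by
      intro f; simp only [wfun]; split_ifs <;> norm_num
    have hhalf : ∀ f : ↥E, f.val ≠ e → (1:ℝ)/2 ≤ wfun e F f.val := by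
      intro f hf; simp only [wfun]; rw [if_neg hf]; split_ifs <;> norm_num
    obtain ⟨hsub, p, cs, hp1, hp2, hpE, _, _, hFeq⟩ := hF
    constructor
    · by_cases hce : e.1 ∈ S ∧ e.2 ∉ S
      · obtain ⟨s₀, hs₀, hcs₀⟩ := exists_cross (P := (· ∈ S)) p hp1 hp2 hce.1 hce.2
        have hs₀F : s₀ ∈ F := by
          rw [hFeq, List.mem_toFinset]; exact List.mem_append_left _ hs₀
        have hs₀ne : s₀ ≠ e := Finset.ne_of_mem_erase (hsub hs₀F)
        refine one_le_sum_single _ _ ⟨s₀, hpE _ hs₀⟩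
          (Finset.mem_filter.mpr ⟨Finset.mem_attach _ _, hcs₀⟩) ?_ (fun f _ => hnn f)
        show (1:ℝ) ≤ wfun e F s₀
        simp only [wfun]; rw [if_neg hs₀ne, if_pos hs₀F]; norm_num
      · obtain ⟨f₁, hf₁, f₂, hf₂, hne12, hc1, hc2⟩ := exists_two_cut_out E hpaths S ha hb
        apply one_le_sum_half
        · intro f hf
          refine hhalf f (fun h => hce ?_)
          have := (Finset.mem_filter.mp hf).2
          rwa [h] at this
        · refine Finset.one_lt_card.mpr ⟨⟨f₁, hf₁⟩, ?_, ⟨f₂, hf₂⟩, ?_, ?_⟩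
          · exact Finset.mem_filter.mpr ⟨Finset.mem_attach _ _, hc1⟩
          · exact Finset.mem_filter.mpr ⟨Finset.mem_attach _ _, hc2⟩
          · exact fun h => hne12 (congrArg Subtype.val h)
    · by_cases hce : e.1 ∉ S ∧ e.2 ∈ S
      · obtain ⟨s₀, hs₀, hcs₀⟩ :=
          exists_cross (P := (· ∉ S)) p hp1 hp2 hce.1 (not_not_intro hce.2)
        have hs₀F : s₀ ∈ F := by
          rw [hFeq, List.mem_toFinset]; exact List.mem_append_left _ hs₀
        have hs₀ne : s₀ ≠ e := Finset.ne_of_mem_erase (hsub hs₀F)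
        refine one_le_sum_single _ _ ⟨s₀, hpE _ hs₀⟩
          (Finset.mem_filter.mpr ⟨Finset.mem_attach _ _, ⟨hcs₀.1, not_not.mp hcs₀.2⟩⟩)
          ?_ (fun f _ => hnn f)
        show (1:ℝ) ≤ wfun e F s₀
        simp only [wfun]; rw [if_neg hs₀ne, if_pos hs₀F]; norm_num
      · obtain ⟨f₁, hf₁, f₂, hf₂, hne12, hc1, hc2⟩ := exists_two_cut_in E hpaths S ha hb
        apply one_le_sum_half
        · intro f hf
          refine hhalf f (fun h => hce ?_)
          have := (Finset.mem_filter.mp hf).2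
          rwa [h] at this
        · refine Finset.one_lt_card.mpr ⟨⟨f₁, hf₁⟩, ?_, ⟨f₂, hf₂⟩, ?_, ?_⟩
          · exact Finset.mem_filter.mpr ⟨Finset.mem_attach _ _, hc1⟩
          · exact Finset.mem_filter.mpr ⟨Finset.mem_attach _ _, hc2⟩
          · exact fun h => hne12 (congrArg Subtype.val h)

end Stmt5Aux

theorem stmt5 {V : Type*} [Fintype V] [DecidableEq V] (E : Finset (V × V))
    (hloop : ∀ e ∈ E, e.1 ≠ e.2)
    (hdeg : ∀ v : V, outDeg E v = 2 ∧ inDeg E v = 2)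
    (hpaths : ∀ u v : V, u ≠ v → TwoEdgeDisjointPaths E u v)
    (Fam : ↥E → Finset (V × V))
    (hFrame : ∀ e : ↥E, IsFrame E e.val (Fam e))
    (hSymm : ∀ e₁ e₂ : ↥E, e₂.val ∈ Fam e₁ ↔ e₁.val ∈ Fam e₂) :
    (fun _ : ↥E => (2 / 3 : ℝ)) ∈ lsN (ATbal Finset.univ E) := by
  classical
  have hznotmem : ∀ e : ↥E, e.val ∉ Fam e := by
    intro e h
    exact Finset.notMem_erase e.val E ((hFrame e).1 h)
  have hzdiag : ∀ e : ↥E, zfun e.val (Fam e) e.val = 1 := by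
    intro e; simp [zfun, hznotmem e]; norm_num
  have hzsymm : ∀ e f : ↥E, zfun e.val (Fam e) f.val = zfun f.val (Fam f) e.val := by
    intro e f
    by_cases h : f.val = e.val
    · have hef : e = f := Subtype.ext h.symm
      rw [hef]
    · simp only [zfun]
      rw [if_neg h, if_neg (Ne.symm h)]
      have hiff : (if f.val ∈ Fam e then (1:ℝ) else 0) = (if e.val ∈ Fam f then 1 else 0) := by
        by_cases h2 : f.val ∈ Fam e
        · rw [if_pos h2, if_pos ((hSymm e f).mp h2)]
        · rw [if_neg h2, if_neg (fun hh => h2 ((hSymm e f).mpr hh))]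
      rw [hiff]
  refine ⟨fun i j => match i, j with
    | none, none => 1
    | none, some _ => 2/3
    | some _, none => 2/3
    | some e, some f => 2/3 * zfun e.val (Fam e) f.val, ?_, rfl, fun i => rfl, ?_, ?_, ?_⟩
  · intro i j
    match i, j with
    | none, none => rfl
    | none, some f => rfl
    | some e, none => rfl
    | some e, some f => show 2/3 * _ = 2/3 * _; rw [hzsymm]
  · intro e
    show 2/3 * zfun e.val (Fam e) e.val = 2/3
    rw [hzdiag]; norm_num
  · intro e
    exact ⟨2/3, fun f => zfun e.val (Fam e) f.val,
      z_mem E hloop hdeg hpaths e.val e.prop (Fam e) (hFrame e), by norm_num, rfl, rfl⟩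
  · intro e
    refine ⟨1/3, fun f => wfun e.val (Fam e) f.val,
      w_mem E hloop hdeg hpaths e.val e.prop (Fam e) (hFrame e), by norm_num, by norm_num, ?_⟩
    funext j
    show (2:ℝ)/3 - 2/3 * zfun e.val (Fam e) j.val = 1/3 * wfun e.val (Fam e) j.val
    simp only [zfun, wfun]
    ring


end TSPGap
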